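/- For an occurrence (i,j) in text T with 1 < i and j < n: if f(T[i-1..j]) = 1 and f(T[i..j+1]) = 1, then f(T[i-1..j+1]) = 1. -/

import Mathlib

variable {α : Type*} [DecidableEq α]

/-- Number of occurrences of `S` as a substring of `T`. -/
def occ (T S : List α) : ℕ :=
  ((Finset.range T.length).filter (fun i => S <+: T.drop i)).card

/-- The (1-indexed) substring `T[a..b]`. -/
def substr (T : List α) (a b : ℕ) : List α :=
  (T.drop (a - 1)).take (b - a + 1)

/-- For an occurrence `(i, j)` with `1 < i` and `j < n`: if `f(T[i-1..j]) = 1` and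
`f(T[i..j+1]) = 1`, then `f(T[i-1..j+1]) = 1`. -/
theorem bidirectional_extension_unique (T : List α) (i j : ℕ)
    (hi : 1 < i) (hij : i ≤ j) (hj : j < T.length)
    (hleft : occ T (substr T (i - 1) j) = 1)
    (hright : occ T (substr T i (j + 1)) = 1) :
    occ T (substr T (i - 1) (j + 1)) = 1 := by
  classical
  set M := substr T (i - 1) (j + 1) with hM
  set L := substr T (i - 1) j with hL
  have hLM : L <+: M := by
    rw [hL, hM, substr, substr]
    have h1 : j - (i - 1) + 1 ≤ j + 1 - (i - 1) + 1 := by omega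
    exact List.take_prefix_take_left h1
  set A := (Finset.range T.length).filter (fun p => M <+: T.drop p) with hA
  set B := (Finset.range T.length).filter (fun p => L <+: T.drop p) with hB
  have hsub : A ⊆ B := by
    intro p hp
    rw [hA, Finset.mem_filter] at hp
    rw [hB, Finset.mem_filter]
    exact ⟨hp.1, hLM.trans hp.2⟩
  have hmem : i - 2 ∈ A := by
    rw [hA, Finset.mem_filter]
    constructor
    · exact Finset.mem_range.mpr (by omega)
    · rw [hM, substr]
      have : i - 1 - 1 = i - 2 := by omega
      rw [this]
      exact List.take_prefix _ _
  have h1 : A.card ≤ 1 := hleft ▸ Finset.card_le_card hsub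
  have h2 : 1 ≤ A.card := Finset.card_pos.mpr ⟨_, hmem⟩
  show A.card = 1
  omega
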